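/- Main theorem (only-if direction): Suppose each agent i ∈ {0,1,...,n} has an expected multi-utility preference given by a nonempty compact convex set U_i of nonconstant functions Z → ℝ, and (U_1,...,U_n) has a no-conflict pair with U_0 also respecting it (i.e., u(z*) > u(z_*) for all u ∈ ∪_{i=0}^n U_i). If the Pareto-star principle holds, then for every combination (u_1,...,u_n) ∈ Π_{i=1}^n U_i there exist u_0 ∈ U_0, a nonzero vector α ∈ ℝ^n_{≥0}, and β ∈ ℝ such that u_0 = Σ_{i=1}^n α_i u_i + β·1. -/

import Mathlib

open Finset

/-- Expected utility of lottery `l` with utility `u`. -/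
def EU {Z : Type*} [Fintype Z] (l u : Z → ℝ) : ℝ := ∑ z, l z * u z

/-- `l` is a lottery (probability distribution) on `Z`. -/
def IsLottery {Z : Type*} [Fintype Z] (l : Z → ℝ) : Prop :=
  (∀ z, 0 ≤ l z) ∧ ∑ z, l z = 1

/-- Expected multi-utility preference: `l ≿ l'` under the set `U`. -/
def Pref {Z : Type*} [Fintype Z] (U : Set (Z → ℝ)) (l l' : Z → ℝ) : Prop :=
  ∀ u ∈ U, EU l' u ≤ EU l u

/-- `u` is nonconstant. -/
def Nonconst {Z : Type*} (u : Z → ℝ) : Prop := ∃ z z', u z ≠ u z'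


/-- A finitely generated convex cone in a finite-dimensional normed space is closed. -/
lemma isClosed_coneOf {E : Type*} [NormedAddCommGroup E] [NormedSpace ℝ E]
    [FiniteDimensional ℝ E] {ι : Type*} [DecidableEq ι] (v : ι → E) (s : Finset ι) :
    IsClosed {x : E | ∃ α : ι → ℝ, (∀ i, 0 ≤ α i) ∧ x = ∑ i ∈ s, α i • v i} := by
  induction s using Finset.strongInduction with
  | _ s ih =>
  by_cases hli : LinearIndependent ℝ (fun i : {x // x ∈ s} => v i)
  · -- independent: closed embedding image of closed orthant
    let T : ({x // x ∈ s} → ℝ) →ₗ[ℝ] E :=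
      { toFun := fun α => ∑ i : {x // x ∈ s}, α i • v ↑i
        map_add' := by intro a b; simp [add_smul, Finset.sum_add_distrib]
        map_smul' := by intro c a; simp [smul_smul, Finset.smul_sum]
      }
    have hker : LinearMap.ker T = ⊥ := by
      rw [LinearMap.ker_eq_bot']
      intro m hm
      funext i
      exact Fintype.linearIndependent_iff.mp hli m hm i
    have hce := LinearMap.isClosedEmbedding_of_injective (f := T) hker
    have hset : {x : E | ∃ α : ι → ℝ, (∀ i, 0 ≤ α i) ∧ x = ∑ i ∈ s, α i • v i}
        = T '' {α : {x // x ∈ s} → ℝ | ∀ i, 0 ≤ α i} := by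
      ext x
      constructor
      · rintro ⟨α, hα, rfl⟩
        refine ⟨fun i => α ↑i, fun i => hα _, ?_⟩
        show ∑ i : {x // x ∈ s}, α ↑i • v ↑i = _
        rw [← Finset.sum_coe_sort s (fun i => α i • v i)]
      · rintro ⟨α, hα, rfl⟩
        refine ⟨fun i => if h : i ∈ s then α ⟨i, h⟩ else 0, ?_, ?_⟩
        · intro i
          by_cases h : i ∈ s
          · simpa [h] using hα ⟨i, h⟩
          · simp [h]
        · show T α = _
          rw [← Finset.sum_coe_sort s (fun i => (if h : i ∈ s then α ⟨i, h⟩ else 0) • v i)]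
          refine Finset.sum_congr rfl fun i _ => ?_
          simp [i.2]
    rw [hset]
    have horth : {α : {x // x ∈ s} → ℝ | ∀ i, 0 ≤ α i}
        = ⋂ i, {α : {x // x ∈ s} → ℝ | 0 ≤ α i} := by
      ext a; simp [Set.mem_iInter]
    rw [horth]
    exact hce.isClosedMap _ (isClosed_iInter fun i =>
      isClosed_le continuous_const (continuous_apply i))
  · -- dependent: Caratheodory reduction to smaller subsets
    obtain ⟨g, hg0, j, hj⟩ := Fintype.not_linearIndependent_iff.mp hli
    -- get a coefficient vector with a positive entry
    obtain ⟨c, hc0, j', hj'⟩ :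
        ∃ c : {x // x ∈ s} → ℝ, ∑ i, c i • v ↑i = 0 ∧ ∃ i, 0 < c i := by
      rcases hj.lt_or_gt with h | h
      · exact ⟨-g, by simpa using congrArg Neg.neg hg0, j, by simpa using h⟩
      · exact ⟨g, hg0, j, h⟩
    classical
    have key : {x : E | ∃ α : ι → ℝ, (∀ i, 0 ≤ α i) ∧ x = ∑ i ∈ s, α i • v i}
        = ⋃ i ∈ (s.attach.filter fun i => 0 < c i),
            {x : E | ∃ α : ι → ℝ, (∀ k, 0 ≤ α k) ∧ x = ∑ k ∈ s.erase ↑i, α k • v k} := by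
      ext x
      simp only [Set.mem_iUnion, Set.mem_setOf_eq, Finset.mem_filter, Finset.mem_attach,
        true_and, exists_prop]
      constructor
      · rintro ⟨α, hα, rfl⟩
        set Tf := s.attach.filter fun i => 0 < c i with hTf
        have hTne : Tf.Nonempty := ⟨j', by simp [hTf, hj']⟩
        obtain ⟨i₀, hi₀T, hi₀min⟩ := Tf.exists_min_image (fun i => α ↑i / c i) hTne
        have hci₀ : 0 < c i₀ := (Finset.mem_filter.mp hi₀T).2
        set t := α ↑i₀ / c i₀ with htdef
        have ht : 0 ≤ t := div_nonneg (hα _) hci₀.le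
        -- extended coefficient vector
        set c' : ι → ℝ := fun i => if h : i ∈ s then c ⟨i, h⟩ else 0 with hc'
        have hc'sum : ∑ i ∈ s, c' i • v i = 0 := by
          rw [← Finset.sum_coe_sort s (fun i => c' i • v i)]
          rw [← hc0]
          refine Finset.sum_congr rfl fun i _ => ?_
          simp [hc', i.2]
        set α' : ι → ℝ := fun i => α i - t * c' i with hα'
        have hα'nn : ∀ i, 0 ≤ α' i := by
          intro i
          simp only [hα', hc']
          by_cases h : i ∈ s
          · simp only [h, dif_pos]
            rcases le_or_gt (c ⟨i, h⟩) 0 with hc | hc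
            · nlinarith [hα i]
            · have := hi₀min ⟨i, h⟩ (by simp [hTf, hc])
              rw [htdef]
              rw [div_le_div_iff₀ hci₀ hc] at this
              have : t * c ⟨i, h⟩ ≤ α i := by
                rw [htdef, div_mul_eq_mul_div, div_le_iff₀ hci₀]
                linarith
              linarith
          · simp [h, hα i]
        have hα'i₀ : α' ↑i₀ = 0 := by
          have hmem : (↑i₀ : ι) ∈ s := i₀.2
          simp only [hα', hc', hmem, dif_pos]
          have heq : (⟨↑i₀, hmem⟩ : {x // x ∈ s}) = i₀ := Subtype.ext rfl
          rw [heq, htdef]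
          field_simp
          ring
        refine ⟨i₀, hci₀, α', hα'nn, ?_⟩
        have hsum : ∑ i ∈ s, α' i • v i = ∑ i ∈ s, α i • v i := by
          simp only [hα', sub_smul, Finset.sum_sub_distrib, mul_smul]
          rw [← Finset.smul_sum, hc'sum, smul_zero, sub_zero]
        rw [← hsum, ← Finset.add_sum_erase s (fun i => α' i • v i) i₀.2, hα'i₀, zero_smul,
          zero_add]
      · rintro ⟨i, hiT, α, hα, rfl⟩
        refine ⟨Function.update α ↑i 0, ?_, ?_⟩
        · intro k
          rcases eq_or_ne k ↑i with rfl | h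
          · simp
          · simp [Function.update_of_ne h, hα]
        · rw [← Finset.add_sum_erase s (fun k => Function.update α (↑i) 0 k • v k) i.2]
          simp only [Function.update_self, zero_smul, zero_add]
          refine Finset.sum_congr rfl fun k hk => ?_
          rw [Function.update_of_ne (Finset.ne_of_mem_erase hk)]
    rw [key]
    refine Set.Finite.isClosed_biUnion (Finset.finite_toSet _) fun i hi => ?_
    exact ih (s.erase ↑i) (Finset.erase_ssubset i.2)

theorem pareto_star_only_if
    {Z : Type*} [Fintype Z] [Nonempty Z] {n : ℕ} (hn : 0 < n)
    (U : Fin n → Set (Z → ℝ)) (U₀ : Set (Z → ℝ))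
    (hUne : ∀ i, (U i).Nonempty) (hU₀ne : U₀.Nonempty)
    (hUcpt : ∀ i, IsCompact (U i)) (hU₀cpt : IsCompact U₀)
    (hUcvx : ∀ i, Convex ℝ (U i)) (hU₀cvx : Convex ℝ U₀)
    (hUnc : ∀ i, ∀ u ∈ U i, Nonconst u) (hU₀nc : ∀ u ∈ U₀, Nonconst u)
    (hnc : ∃ zs zi : Z, (∀ i, ∀ u ∈ U i, u zi < u zs) ∧ (∀ u ∈ U₀, u zi < u zs))
    (hps : ∀ l l' : Z → ℝ, IsLottery l → IsLottery l' →
      (∀ i, ¬ Pref (U i) l l') → ¬ Pref U₀ l l') :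
    ∀ u : Fin n → (Z → ℝ), (∀ i, u i ∈ U i) →
      ∃ u₀ ∈ U₀, ∃ α : Fin n → ℝ, ∃ β : ℝ,
        (∀ i, 0 ≤ α i) ∧ α ≠ 0 ∧ u₀ = fun z => (∑ i, α i * u i z) + β := by
  classical
  intro u hu
  by_contra hexists
  push_neg at hexists
  obtain ⟨zs, zi, hncU, hncU₀⟩ := hnc
  -- The cone generated by the `u i` and the constants
  set K : Set (Z → ℝ) := {x | ∃ α : Fin n → ℝ, ∃ β : ℝ, (∀ i, 0 ≤ α i) ∧
    x = fun z => (∑ i, α i * u i z) + β} with hKdef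
  have hdisj : Disjoint U₀ K := by
    rw [Set.disjoint_left]
    rintro a ha ⟨α, β, hα, hrep⟩
    by_cases hα0 : α = 0
    · obtain ⟨z, z', hzz⟩ := hU₀nc a ha
      apply hzz
      subst hα0
      rw [hrep]
      simp
    · exact hexists a ha α β hα hα0 hrep
  -- K is closed
  have hKcl : IsClosed K := by
    have hKeq : K = {x : Z → ℝ | ∃ γ : (Fin n ⊕ Bool) → ℝ, (∀ j, 0 ≤ γ j) ∧
        x = ∑ j ∈ Finset.univ,
          γ j • (Sum.elim u (fun b => cond b (fun _ => (1:ℝ)) (fun _ => (-1:ℝ)))) j} := by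
      ext x
      constructor
      · rintro ⟨α, β, hα, rfl⟩
        refine ⟨Sum.elim α (fun b => cond b (max β 0) (max (-β) 0)), ?_, ?_⟩
        · rintro (i | b)
          · exact hα i
          · cases b <;> simp [le_max_right]
        · funext z
          simp only [Finset.sum_apply, Pi.smul_apply, smul_eq_mul, Fintype.sum_sum_type,
            Sum.elim_inl, Sum.elim_inr, Fintype.sum_bool, Bool.cond_true, Bool.cond_false]
          have h := max_zero_sub_max_neg_zero_eq_self β
          ring_nf
          linarith [h]
      · rintro ⟨γ, hγ, rfl⟩
        refine ⟨fun i => γ (.inl i), γ (.inr true) - γ (.inr false), fun i => hγ _, ?_⟩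
        funext z
        simp only [Finset.sum_apply, Pi.smul_apply, smul_eq_mul, Fintype.sum_sum_type,
          Sum.elim_inl, Sum.elim_inr, Fintype.sum_bool, Bool.cond_true, Bool.cond_false]
        ring
    rw [hKeq]
    exact isClosed_coneOf _ _
  -- K is convex
  have hKcvx : Convex ℝ K := by
    rintro x ⟨α₁, β₁, hα₁, rfl⟩ y ⟨α₂, β₂, hα₂, rfl⟩ p q hp hq hpq
    refine ⟨fun i => p * α₁ i + q * α₂ i, p * β₁ + q * β₂,
      fun i => add_nonneg (mul_nonneg hp (hα₁ i)) (mul_nonneg hq (hα₂ i)), ?_⟩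
    funext z
    simp only [Pi.add_apply, Pi.smul_apply, smul_eq_mul]
    have h : ∑ i, (p * α₁ i + q * α₂ i) * u i z
        = p * ∑ i, α₁ i * u i z + q * ∑ i, α₂ i * u i z := by
      rw [Finset.mul_sum, Finset.mul_sum, ← Finset.sum_add_distrib]
      exact Finset.sum_congr rfl fun i _ => by ring
    rw [h]
    ring
  -- scaling
  have hscale : ∀ t : ℝ, 0 ≤ t → ∀ x ∈ K, t • x ∈ K := by
    rintro t ht x ⟨α, β, hα, rfl⟩
    refine ⟨fun i => t * α i, t * β, fun i => mul_nonneg ht (hα i), ?_⟩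
    funext z
    simp only [Pi.smul_apply, smul_eq_mul]
    have h : ∑ i, (t * α i) * u i z = t * ∑ i, α i * u i z := by
      rw [Finset.mul_sum]
      exact Finset.sum_congr rfl fun i _ => by ring
    rw [h]
    ring
  -- separation
  obtain ⟨f, a1, a2, hfU₀, h12, hfK⟩ :=
    geometric_hahn_banach_compact_closed hU₀cvx hU₀cpt hKcvx hKcl hdisj
  have h0K : (0 : Z → ℝ) ∈ K := ⟨0, 0, fun i => le_refl 0, by funext z; simp⟩
  have ha2neg : a2 < 0 := by
    have := hfK 0 h0K
    rwa [map_zero] at this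
  have hfKnn : ∀ x ∈ K, 0 ≤ f x := by
    intro x hx
    by_contra hneg
    push_neg at hneg
    have ht : 0 < (2 * a2) / (f x) := div_pos_of_neg_of_neg (by linarith) hneg
    have := hfK _ (hscale _ ht.le x hx)
    rw [map_smul, smul_eq_mul, div_mul_cancel₀ _ hneg.ne] at this
    linarith
  have honeK : (fun _ : Z => (1:ℝ)) ∈ K :=
    ⟨0, 1, fun i => le_refl 0, by funext z; simp⟩
  have hnegoneK : (fun _ : Z => (-1:ℝ)) ∈ K :=
    ⟨0, -1, fun i => le_refl 0, by funext z; simp⟩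
  have huiK : ∀ i, u i ∈ K := by
    intro i
    refine ⟨Pi.single i 1, 0, fun j => by by_cases h : j = i <;> simp [Pi.single_apply, h], ?_⟩
    funext z
    simp [Pi.single_apply, ite_mul, Finset.sum_ite_eq']
  have hfone : f (fun _ : Z => (1:ℝ)) = 0 := by
    have h1 := hfKnn _ honeK
    have h2 := hfKnn _ hnegoneK
    have hneg : (fun _ : Z => (-1:ℝ)) = -(fun _ : Z => (1:ℝ)) := by funext z; simp
    rw [hneg, map_neg] at h2
    linarith
  -- express f as a sum
  set g : Z → ℝ := fun z => f (fun j => if z = j then (1:ℝ) else 0) with hgdef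
  have hf_eq : ∀ w : Z → ℝ, f w = ∑ z, w z * g z := by
    intro w
    conv_lhs => rw [pi_eq_sum_univ w]
    rw [map_sum]
    simp [hgdef, smul_eq_mul]
  have hgsum : ∑ z, g z = 0 := by
    have := hf_eq (fun _ => (1:ℝ))
    rw [hfone] at this
    simpa using this.symm
  set S : ℝ := ∑ z, max (g z) 0 with hSdef
  have hSeq : ∑ z, max (-g z) 0 = S := by
    have h : ∑ z, (max (g z) 0 - max (-g z) 0) = 0 := by
      simp only [max_zero_sub_max_neg_zero_eq_self]
      exact hgsum
    rw [Finset.sum_sub_distrib] at h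
    linarith
  have hSpos : 0 < S := by
    rcases lt_or_eq_of_le (Finset.sum_nonneg fun z _ => le_max_right (g z) 0 : (0:ℝ) ≤ S) with h | h
    · exact h
    · exfalso
      obtain ⟨a, ha⟩ := hU₀ne
      have hfa : f a < 0 := lt_trans (lt_trans (hfU₀ a ha) h12) ha2neg
      have hg0 : ∀ z, g z = 0 := by
        intro z
        have h1 : max (g z) 0 = 0 := by
          have := Finset.sum_eq_zero_iff_of_nonneg
            (fun z _ => le_max_right (g z) 0 (α := ℝ)) |>.mp h.symm z (Finset.mem_univ z)
          exact this
        have h2 : max (-g z) 0 = 0 := by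
          have hS2 : ∑ z, max (-g z) 0 = 0 := by linarith [hSeq]
          exact Finset.sum_eq_zero_iff_of_nonneg
            (fun z _ => le_max_right (-g z) 0 (α := ℝ)) |>.mp hS2 z (Finset.mem_univ z)
        have := le_max_left (g z) 0
        have := le_max_left (-g z) 0
        linarith
      rw [hf_eq a] at hfa
      simp [hg0] at hfa
  -- the two lotteries
  set l : Z → ℝ := fun z => max (g z) 0 / S with hldef
  set l' : Z → ℝ := fun z => max (-g z) 0 / S with hl'def
  have hdiff : ∀ w : Z → ℝ, EU l w - EU l' w = f w / S := by
    intro w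
    rw [hf_eq w]
    unfold EU
    rw [← Finset.sum_sub_distrib, Finset.sum_div]
    refine Finset.sum_congr rfl fun z _ => ?_
    simp only [hldef, hl'def]
    rw [div_mul_eq_mul_div, div_mul_eq_mul_div, div_sub_div_same, ← sub_mul,
      max_zero_sub_max_neg_zero_eq_self]
    ring
  -- the bound over U₀
  obtain ⟨a₀, ha₀, hmax'⟩ := hU₀cpt.exists_isMaxOn hU₀ne
    (((continuous_apply zs).sub (continuous_apply zi)).continuousOn)
  set M : ℝ := a₀ zs - a₀ zi with hMdef
  have hmax : ∀ a ∈ U₀, a zs - a zi ≤ M := fun a ha => hmax' ha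
  have hM : 0 < M := sub_pos.mpr (hncU₀ a₀ ha₀)
  set d : ℝ := -a2 / S with hddef
  have hd : 0 < d := div_pos (by linarith) hSpos
  set ε : ℝ := d / (M + d) with hεdef
  have hε : 0 < ε := div_pos hd (by linarith)
  have hε1 : ε < 1 := (div_lt_one (by linarith)).mpr (by linarith)
  set lε : Z → ℝ := fun z => (1 - ε) * l z + ε * (if z = zs then 1 else 0) with hlεdef
  set l'ε : Z → ℝ := fun z => (1 - ε) * l' z + ε * (if z = zi then 1 else 0) with hl'εdef
  have hind : ∀ z₀ : Z, ∑ z, (if z = z₀ then (1:ℝ) else 0) = 1 := by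
    intro z₀
    rw [Finset.sum_ite_eq' Finset.univ z₀ (fun _ => (1:ℝ))]
    simp
  have hllot : IsLottery l := by
    constructor
    · intro z
      exact div_nonneg (le_max_right _ _) hSpos.le
    · rw [hldef, ← Finset.sum_div, ← hSdef, div_self hSpos.ne']
  have hl'lot : IsLottery l' := by
    constructor
    · intro z
      exact div_nonneg (le_max_right _ _) hSpos.le
    · rw [hl'def, ← Finset.sum_div, hSeq, div_self hSpos.ne']
  have hlεlot : IsLottery lε := by
    constructor
    · intro z
      have h0 := hllot.1 z
      have ha : 0 ≤ (1 - ε) * l z := mul_nonneg (by linarith) h0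
      have hb : (0:ℝ) ≤ ε * (if z = zs then 1 else 0) := by
        by_cases h : z = zs <;> simp [h, hε.le]
      simp only [hlεdef]
      linarith
    · rw [hlεdef]
      rw [Finset.sum_add_distrib, ← Finset.mul_sum, ← Finset.mul_sum, hllot.2, hind zs]
      ring
  have hl'εlot : IsLottery l'ε := by
    constructor
    · intro z
      have h0 := hl'lot.1 z
      have ha : 0 ≤ (1 - ε) * l' z := mul_nonneg (by linarith) h0
      have hb : (0:ℝ) ≤ ε * (if z = zi then 1 else 0) := by
        by_cases h : z = zi <;> simp [h, hε.le]
      simp only [hl'εdef]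
      linarith
    · rw [hl'εdef]
      rw [Finset.sum_add_distrib, ← Finset.mul_sum, ← Finset.mul_sum, hl'lot.2, hind zi]
      ring
  -- expected utility of perturbed lotteries
  have hEUε : ∀ w : Z → ℝ, EU lε w - EU l'ε w
      = (1 - ε) * (f w / S) + ε * (w zs - w zi) := by
    intro w
    have h1 : ∀ (z₀ : Z), ∑ z, (if z = z₀ then (1:ℝ) else 0) * w z = w z₀ := by
      intro z₀
      simp only [ite_mul, one_mul, zero_mul, Finset.sum_ite_eq', Finset.mem_univ, if_true]
    have h2 : EU lε w = (1 - ε) * EU l w + ε * w zs := by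
      unfold EU
      simp only [hlεdef]
      simp only [add_mul, mul_assoc]
      rw [Finset.sum_add_distrib, ← Finset.mul_sum, ← Finset.mul_sum, h1 zs]
    have h3 : EU l'ε w = (1 - ε) * EU l' w + ε * w zi := by
      unfold EU
      simp only [hl'εdef]
      simp only [add_mul, mul_assoc]
      rw [Finset.sum_add_distrib, ← Finset.mul_sum, ← Finset.mul_sum, h1 zi]
    rw [h2, h3, ← hdiff w]
    ring
  -- every agent strictly prefers lε to l'ε
  have hagents : ∀ i, ¬ Pref (U i) l'ε lε := by
    intro i hPref
    have h := hPref (u i) (hu i)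
    have hpos : 0 < EU lε (u i) - EU l'ε (u i) := by
      rw [hEUε (u i)]
      have h1 : 0 ≤ f (u i) / S := div_nonneg (hfKnn _ (huiK i)) hSpos.le
      have h2 : 0 < u i zs - u i zi := sub_pos.mpr (hncU i (u i) (hu i))
      nlinarith
    linarith
  -- but society weakly prefers l'ε to lε: contradiction
  have hsoc : Pref U₀ l'ε lε := by
    intro a ha
    have hfa : f a < a2 := lt_trans (hfU₀ a ha) h12
    have h1 : f a / S < -d := by
      have hpos : 0 < (a2 - f a) / S := div_pos (by linarith) hSpos
      rw [sub_div] at hpos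
      rw [hddef, neg_div, neg_neg]
      linarith
    have h2 : a zs - a zi ≤ M := hmax a ha
    have hkey : EU lε a - EU l'ε a < 0 := by
      rw [hEUε a]
      have e1 : (1 - ε) * (f a / S) < (1 - ε) * (-d) :=
        mul_lt_mul_of_pos_left h1 (by linarith)
      have e2 : ε * (a zs - a zi) ≤ ε * M := mul_le_mul_of_nonneg_left h2 hε.le
      have e3 : (1 - ε) * (-d) + ε * M = 0 := by
        have hMd : M + d ≠ 0 := ne_of_gt (by linarith : (0:ℝ) < M + d)
        rw [hεdef]
        field_simp
        ring
      linarith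
    linarith
  exact hps l'ε lε hl'εlot hlεlot hagents hsoc
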